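/- Let A, B ∈ ℝ^{n×n×n₃} with A f-symmetric and B f-symmetric positive definite, and let ρ* be the maximum of the trace ratio ρ(V) = Trace(Vᵀ⋆A⋆V)/Trace(Vᵀ⋆B⋆V) over f-orthogonal V ∈ ℝ^{n×d×n₃}. Then the function f(ρ) = max_{Vᵀ⋆V=I_d} Trace(Vᵀ⋆(A − ρB)⋆V) satisfies f(ρ*) = 0. -/

import Mathlib

open Matrix Complex Finset Kronecker ComplexOrder

abbrev Tensor (n₁ n₂ n₃ : ℕ) := Fin n₃ → Matrix (Fin n₁) (Fin n₂) ℝ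

/-- The DFT along the third (tube) mode: the `i`-th Fourier frontal slice `Â⁽ⁱ⁾`. -/
noncomputable def dftSlice {n₁ n₂ n₃ : ℕ} (A : Tensor n₁ n₂ n₃) (i : Fin n₃) :
    Matrix (Fin n₁) (Fin n₂) ℂ :=
  ∑ k : Fin n₃,
    Complex.exp (-2 * Real.pi * Complex.I * ((i : ℕ) : ℂ) * ((k : ℕ) : ℂ) / (n₃ : ℂ)) •
      (A k).map Complex.ofReal

/-- The t-product `A ⋆ B = fold (bcirc A · unfold B)`, i.e. circular convolution of
frontal slices. -/
noncomputable def tProd {n₁ q n₂ n₃ : ℕ} (A : Tensor n₁ q n₃) (B : Tensor q n₂ n₃) :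
    Tensor n₁ n₂ n₃ :=
  fun k => ∑ m : Fin n₃, A m * B (k - m)

/-- Tensor transpose: transpose each frontal slice and reverse the order of slices 2..n₃. -/
def tTranspose {n₁ n₂ n₃ : ℕ} (A : Tensor n₁ n₂ n₃) : Tensor n₂ n₁ n₃ :=
  fun k => (A (-k)).transpose

/-- Identity tensor: first frontal slice is the identity matrix, the rest are zero. -/
def tId (n n₃ : ℕ) [NeZero n₃] : Tensor n n n₃ := fun k => if k = 0 then 1 else 0

/-- Tensor trace `(1/n₃) Σᵢ trace Â⁽ⁱ⁾` (complex-valued form). -/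
noncomputable def tTraceC {n n₃ : ℕ} (A : Tensor n n n₃) : ℂ :=
  (n₃ : ℂ)⁻¹ * ∑ i : Fin n₃, (dftSlice A i).trace

/-- Tensor trace (real value). -/
noncomputable def tTraceR {n n₃ : ℕ} (A : Tensor n n n₃) : ℝ := (tTraceC A).re

/-- Squared Frobenius norm of a third-order tensor. -/
def frobSq {n₁ n₂ n₃ : ℕ} (A : Tensor n₁ n₂ n₃) : ℝ :=
  ∑ k : Fin n₃, ∑ p, ∑ q, (A k p q) ^ 2


noncomputable def coef (n₃ : ℕ) (i k : Fin n₃) : ℂ :=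
  Complex.exp (-2 * Real.pi * Complex.I * ((i : ℕ) : ℂ) * ((k : ℕ) : ℂ) / (n₃ : ℂ))

variable {n₃ : ℕ} [NeZero n₃]

lemma coef_add (i a b : Fin n₃) : coef n₃ i (a + b) = coef n₃ i a * coef n₃ i b := by
  have hn : (n₃ : ℂ) ≠ 0 := Nat.cast_ne_zero.mpr (NeZero.ne n₃)
  rw [coef, coef, coef, ← Complex.exp_add, Complex.exp_eq_exp_iff_exists_int]
  set q : ℕ := ((a : ℕ) + (b : ℕ)) / n₃ with hq
  refine ⟨((i : ℕ) * q : ℕ), ?_⟩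
  have hval : (((a + b : Fin n₃) : ℕ) : ℂ) =
      ((a : ℕ) : ℂ) + ((b : ℕ) : ℂ) - (n₃ : ℂ) * (q : ℂ) := by
    have h : ((a : ℕ) + (b : ℕ)) % n₃ + n₃ * q = (a : ℕ) + (b : ℕ) :=
      Nat.mod_add_div _ _
    have h2 : ((a + b : Fin n₃) : ℕ) = ((a : ℕ) + (b : ℕ)) % n₃ := Fin.val_add a b
    have h3 := congrArg (Nat.cast : ℕ → ℂ) h
    push_cast at h3
    rw [h2]
    linear_combination h3
  rw [hval]
  push_cast
  field_simp
  ring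

lemma coef_zero (i : Fin n₃) : coef n₃ i 0 = 1 := by
  simp [coef]

lemma coef_ne_zero (i k : Fin n₃) : coef n₃ i k ≠ 0 := Complex.exp_ne_zero _

lemma coef_neg_mul (i k : Fin n₃) : coef n₃ i (-k) * coef n₃ i k = 1 := by
  rw [← coef_add, neg_add_cancel, coef_zero]

lemma conj_coef (i k : Fin n₃) : (starRingEnd ℂ) (coef n₃ i k) = coef n₃ i (-k) := by
  have h1 : (starRingEnd ℂ) (coef n₃ i k) * coef n₃ i k = 1 := by
    rw [coef, ← Complex.exp_conj, ← Complex.exp_add]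
    have : (starRingEnd ℂ) (-2 * ↑Real.pi * I * ((i : ℕ) : ℂ) * ((k : ℕ) : ℂ) / (n₃ : ℂ))
        = -(-2 * ↑Real.pi * I * ((i : ℕ) : ℂ) * ((k : ℕ) : ℂ) / (n₃ : ℂ)) := by
      simp [map_div₀, map_ofNat]
      ring
    rw [this, neg_add_cancel, Complex.exp_zero]
  have h2 := coef_neg_mul i k
  exact mul_right_cancel₀ (coef_ne_zero i k) (h1.trans h2.symm)

lemma dftSlice_eq {n₁ n₂ : ℕ} (A : Tensor n₁ n₂ n₃) (i : Fin n₃) :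
    dftSlice A i = ∑ k : Fin n₃, coef n₃ i k • (A k).map Complex.ofReal := rfl

lemma dftSlice_tProd {n₁ q n₂ : ℕ} (A : Tensor n₁ q n₃) (B : Tensor q n₂ n₃) (i : Fin n₃) :
    dftSlice (tProd A B) i = dftSlice A i * dftSlice B i := by
  rw [dftSlice_eq, dftSlice_eq, dftSlice_eq, Matrix.sum_mul]
  simp_rw [Matrix.mul_sum]
  have : ∀ k : Fin n₃, coef n₃ i k • (tProd A B k).map Complex.ofReal
      = ∑ m : Fin n₃, (coef n₃ i k) • ((A m).map Complex.ofReal * (B (k - m)).map Complex.ofReal) := by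
    intro k
    rw [show tProd A B k = ∑ m : Fin n₃, A m * B (k - m) from rfl]
    rw [show ((∑ m : Fin n₃, A m * B (k - m)).map Complex.ofReal)
        = ∑ m : Fin n₃, ((A m * B (k - m)).map Complex.ofReal) from ?_, Finset.smul_sum]
    · congr 1; funext m
      congr 1
      exact Matrix.map_mul (f := Complex.ofRealHom)
    · ext p r
      simp [Matrix.map_apply, Matrix.sum_apply]
  simp_rw [this]
  rw [Finset.sum_comm]
  refine Finset.sum_congr rfl fun m _ => ?_
  rw [← Fintype.sum_equiv (Equiv.addLeft m)
      (fun j => coef n₃ i (m + j) • ((A m).map Complex.ofReal * (B j).map Complex.ofReal))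
      (fun k => coef n₃ i k • ((A m).map Complex.ofReal * (B (k - m)).map Complex.ofReal))
      (fun j => by simp [Equiv.addLeft])]
  refine Finset.sum_congr rfl fun j _ => ?_
  rw [coef_add, Matrix.smul_mul, Matrix.mul_smul, smul_smul]

lemma dftSlice_tTranspose {n₁ n₂ : ℕ} (V : Tensor n₁ n₂ n₃) (i : Fin n₃) :
    dftSlice (tTranspose V) i = (dftSlice V i)ᴴ := by
  rw [dftSlice_eq, dftSlice_eq]
  rw [conjTranspose_sum]
  rw [← Fintype.sum_equiv (Equiv.neg (Fin n₃))
      (fun j => coef n₃ i (-j) • ((V j).transpose.map Complex.ofReal))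
      (fun k => coef n₃ i k • (tTranspose V k).map Complex.ofReal)
      (fun j => by simp [tTranspose])]
  refine Finset.sum_congr rfl fun j _ => ?_
  rw [conjTranspose_smul, ← conj_coef]
  congr 1
  ext p r
  simp [Matrix.map_apply, Matrix.conjTranspose_apply]

lemma dftSlice_tId {dd : ℕ} (i : Fin n₃) : dftSlice (tId dd n₃) i = 1 := by
  rw [dftSlice_eq]
  rw [Finset.sum_eq_single 0]
  · simp [tId, coef_zero]
  · intro k _ hk; simp [tId, hk]
  · simp

lemma dftSlice_sub_smul {n₁ n₂ : ℕ} (X Y : Tensor n₁ n₂ n₃) (ρ : ℝ) (i : Fin n₃) :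
    dftSlice (X - ρ • Y) i = dftSlice X i - (ρ : ℂ) • dftSlice Y i := by
  ext p r
  simp only [dftSlice_eq, Matrix.sum_apply, Matrix.sub_apply, Matrix.smul_apply,
    Matrix.map_apply, Pi.sub_apply, Pi.smul_apply, smul_eq_mul, Complex.ofReal_sub,
    Complex.ofReal_mul, ← Finset.sum_sub_distrib, Finset.mul_sum]
  refine Finset.sum_congr rfl fun k _ => ?_
  ring

lemma tProd_sub_smul_right {n₁ q n₂ : ℕ} (X : Tensor n₁ q n₃) (A B : Tensor q n₂ n₃) (ρ : ℝ) :
    tProd X (A - ρ • B) = tProd X A - ρ • tProd X B := by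
  funext k
  show (∑ m : Fin n₃, X m * (A (k - m) - ρ • B (k - m)))
      = (∑ m : Fin n₃, X m * A (k - m)) - ρ • ∑ m : Fin n₃, X m * B (k - m)
  rw [Finset.smul_sum, ← Finset.sum_sub_distrib]
  refine Finset.sum_congr rfl fun m _ => ?_
  rw [Matrix.mul_sub, Matrix.mul_smul]

lemma tProd_sub_smul_left {n₁ q n₂ : ℕ} (A B : Tensor n₁ q n₃) (X : Tensor q n₂ n₃) (ρ : ℝ) :
    tProd (A - ρ • B) X = tProd A X - ρ • tProd B X := by
  funext k
  show (∑ m : Fin n₃, (A m - ρ • B m) * X (k - m))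
      = (∑ m : Fin n₃, A m * X (k - m)) - ρ • ∑ m : Fin n₃, B m * X (k - m)
  rw [Finset.smul_sum, ← Finset.sum_sub_distrib]
  refine Finset.sum_congr rfl fun m _ => ?_
  rw [Matrix.sub_mul, Matrix.smul_mul]

lemma tTraceR_sub_smul {nn : ℕ} (X Y : Tensor nn nn n₃) (ρ : ℝ) :
    tTraceR (X - ρ • Y) = tTraceR X - ρ * tTraceR Y := by
  have hC : tTraceC (X - ρ • Y) = tTraceC X - (ρ : ℂ) * tTraceC Y := by
    rw [tTraceC, tTraceC, tTraceC]
    simp_rw [dftSlice_sub_smul, Matrix.trace_sub, Matrix.trace_smul, smul_eq_mul,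
      Finset.sum_sub_distrib, ← Finset.mul_sum]
    ring
  rw [tTraceR, tTraceR, tTraceR, hC]
  simp [Complex.sub_re, Complex.re_ofReal_mul]

lemma hI_slice {nn dd : ℕ} (V : Tensor nn dd n₃) (hV : tProd (tTranspose V) V = tId dd n₃)
    (i : Fin n₃) : (dftSlice V i)ᴴ * dftSlice V i = 1 := by
  have h := congrArg (fun T => dftSlice T i) hV
  simpa [dftSlice_tProd, dftSlice_tTranspose, dftSlice_tId] using h

lemma trace_conj_pos {nn dd : ℕ} (hd : 0 < dd) {Bi : Matrix (Fin nn) (Fin nn) ℂ}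
    (hBi : Bi.PosDef) {W : Matrix (Fin nn) (Fin dd) ℂ} (hW : Wᴴ * W = 1) :
    (0:ℂ) < (Wᴴ * Bi * W).trace := by
  haveI : Nonempty (Fin dd) := ⟨⟨0, hd⟩⟩
  rw [Matrix.trace]
  refine Finset.sum_pos (fun j _ => ?_) Finset.univ_nonempty
  set x : Fin nn → ℂ := fun p => W p j with hx
  have hdiag : (Wᴴ * Bi * W).diag j = star x ⬝ᵥ (Bi *ᵥ x) := by
    simp only [Matrix.diag, Matrix.mul_apply, Matrix.conjTranspose_apply, dotProduct,
      Matrix.mulVec, Pi.star_apply, hx, Finset.sum_mul, Finset.mul_sum, dotProduct]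
    rw [Finset.sum_comm]
    refine Finset.sum_congr rfl fun p _ => Finset.sum_congr rfl fun q _ => ?_
    ring
  have hxne : x ≠ 0 := by
    intro h0
    have h1 : (Wᴴ * W) j j = 1 := by rw [hW]; exact Matrix.one_apply_eq j
    rw [Matrix.mul_apply] at h1
    simp only [Matrix.conjTranspose_apply] at h1
    rw [show (∑ p, star (W p j) * W p j) = (0:ℂ) from ?_] at h1
    · exact one_ne_zero h1.symm
    · refine Finset.sum_eq_zero fun p _ => ?_
      have : W p j = 0 := congrFun h0 p
      rw [this, mul_zero]
  rw [hdiag]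
  exact hBi.dotProduct_mulVec_pos hxne

lemma tTraceR_B_pos {nn dd : ℕ} (hd : 0 < dd) (B : Tensor nn nn n₃)
    (hBpd : ∀ i : Fin n₃, (dftSlice B i).PosDef) (V : Tensor nn dd n₃)
    (hV : tProd (tTranspose V) V = tId dd n₃) :
    0 < tTraceR (tProd (tProd (tTranspose V) B) V) := by
  have hslice : ∀ i : Fin n₃, dftSlice (tProd (tProd (tTranspose V) B) V) i
      = (dftSlice V i)ᴴ * dftSlice B i * dftSlice V i := by
    intro i; rw [dftSlice_tProd, dftSlice_tProd, dftSlice_tTranspose]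
  rw [tTraceR, tTraceC]
  rw [show ((n₃:ℂ)⁻¹) = (((n₃:ℝ)⁻¹ : ℝ) : ℂ) by push_cast; ring]
  rw [Complex.re_ofReal_mul]
  have hre : (∑ i : Fin n₃, (dftSlice (tProd (tProd (tTranspose V) B) V) i).trace).re
      = ∑ i : Fin n₃, ((dftSlice (tProd (tProd (tTranspose V) B) V) i).trace).re := by
    exact Complex.re_sum _ _
  rw [hre]
  have hn3 : (0:ℝ) < (n₃:ℝ)⁻¹ := by
    have : 0 < n₃ := Nat.pos_of_ne_zero (NeZero.ne n₃)
    positivity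
  refine mul_pos hn3 (Finset.sum_pos (fun i _ => ?_) Finset.univ_nonempty)
  have := trace_conj_pos hd (hBpd i) (hI_slice V hV i)
  rw [← hslice i] at this
  exact (Complex.lt_def.mp this).1

lemma tTraceR_d0 (X : Tensor 0 0 n₃) : tTraceR X = 0 := by
  simp [tTraceR, tTraceC, Matrix.trace]

/-- If `ρ*` is the maximal value of the trace ratio, then
`f(ρ*) = max_{Vᵀ⋆V = I_d} Trace (Vᵀ⋆(A - ρ*B)⋆V) = 0`. -/
theorem f_at_max_ratio_eq_zero {n d n₃ : ℕ} [NeZero n₃] (A B : Tensor n n n₃)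
    (hA : tTranspose A = A) (hB : tTranspose B = B)
    (hBpd : ∀ i : Fin n₃, (dftSlice B i).PosDef)
    (Vstar : Tensor n d n₃) (hVstar : tProd (tTranspose Vstar) Vstar = tId d n₃)
    (hmax : ∀ V : Tensor n d n₃, tProd (tTranspose V) V = tId d n₃ →
      tTraceR (tProd (tProd (tTranspose V) A) V) /
          tTraceR (tProd (tProd (tTranspose V) B) V) ≤
        tTraceR (tProd (tProd (tTranspose Vstar) A) Vstar) /
          tTraceR (tProd (tProd (tTranspose Vstar) B) Vstar))
    (ρstar : ℝ)
    (hρ : ρstar = tTraceR (tProd (tProd (tTranspose Vstar) A) Vstar) /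
      tTraceR (tProd (tProd (tTranspose Vstar) B) Vstar)) :
    IsGreatest
      {t : ℝ | ∃ V : Tensor n d n₃, tProd (tTranspose V) V = tId d n₃ ∧
        t = tTraceR (tProd (tProd (tTranspose V) (A - ρstar • B)) V)}
      0 := by
  have hsplit : ∀ V : Tensor n d n₃,
      tTraceR (tProd (tProd (tTranspose V) (A - ρstar • B)) V)
        = tTraceR (tProd (tProd (tTranspose V) A) V)
          - ρstar * tTraceR (tProd (tProd (tTranspose V) B) V) := by
    intro V
    rw [tProd_sub_smul_right (tTranspose V) A B ρstar, tProd_sub_smul_left, tTraceR_sub_smul]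
  rcases Nat.eq_zero_or_pos d with hd | hd
  · subst hd
    constructor
    · exact ⟨Vstar, hVstar, (tTraceR_d0 _).symm⟩
    · rintro t ⟨V, hV, rfl⟩
      rw [tTraceR_d0]
  · constructor
    · refine ⟨Vstar, hVstar, ?_⟩
      rw [hsplit Vstar, hρ]
      have hb : 0 < tTraceR (tProd (tProd (tTranspose Vstar) B) Vstar) :=
        tTraceR_B_pos hd B hBpd Vstar hVstar
      rw [div_mul_cancel₀ _ hb.ne']
      ring
    · rintro t ⟨V, hV, rfl⟩
      rw [hsplit V]
      have hb : 0 < tTraceR (tProd (tProd (tTranspose V) B) V) :=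
        tTraceR_B_pos hd B hBpd V hV
      have h1 := hmax V hV
      rw [← hρ] at h1
      have h2 := (div_le_iff₀ hb).mp h1
      linarith
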